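/- Let 𝒳 be a set and σ : 𝒳 → 𝒳 a confined self-map. Assume Λ is finite with Λ > 1 and that the Cesàro mean B := 𝒞(σ_k/Λ^k) exists and is strictly positive. Then M_σ(X) = B log X + o(log X) as X → ∞. -/

import Mathlib

open Filter Topology Real MeasureTheory Asymptotics
open scoped Classical

noncomputable section

/-- `σ` is confined: every iterate has only finitely many fixed points. -/
def Confined {𝒳 : Type*} (σ : 𝒳 → 𝒳) : Prop :=
  ∀ k : ℕ, 1 ≤ k → {x : 𝒳 | σ^[k] x = x}.Finite

/-- `σ_k`: the number of fixed points of the `k`-th iterate of `σ`. -/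
def fixCount {𝒳 : Type*} (σ : 𝒳 → 𝒳) (k : ℕ) : ℕ :=
  Nat.card {x : 𝒳 // σ^[k] x = x}

/-- A prime orbit: a finite set of the form `{x, σ x, …, σ^[ℓ-1] x}` of cardinality
exactly `ℓ ≥ 1`, mapped to itself by `σ`. -/
def IsPrimeOrbit {𝒳 : Type*} (σ : 𝒳 → 𝒳) (P : Set 𝒳) : Prop :=
  ∃ (x : 𝒳) (ℓ : ℕ), 0 < ℓ ∧ P = (fun i => σ^[i] x) '' Set.Iio ℓ ∧ P.ncard = ℓ ∧ σ '' P = P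

/-- The type of prime orbits of `σ`. -/
def PrimeOrbit {𝒳 : Type*} (σ : 𝒳 → 𝒳) := {P : Set 𝒳 // IsPrimeOrbit σ P}

/-- The length `ℓ(P)` of a prime orbit. -/
def orbitLen {𝒳 : Type*} {σ : 𝒳 → 𝒳} (P : PrimeOrbit σ) : ℕ := P.1.ncard

/-- General orbits: elements of the free abelian monoid on the prime orbits,
i.e. finitely supported multisets of prime orbits. -/
abbrev GenOrbit {𝒳 : Type*} (σ : 𝒳 → 𝒳) := PrimeOrbit σ →₀ ℕ

/-- The length of a general orbit: sum of the lengths of its prime components,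
with multiplicity. -/
def genLen {𝒳 : Type*} {σ : 𝒳 → 𝒳} (O : GenOrbit σ) : ℕ :=
  O.sum fun P m => m * orbitLen P

/-- `N_σ(X)`: the number of general orbits of length at most `X`. -/
def Ncount {𝒳 : Type*} (σ : 𝒳 → 𝒳) (X : ℕ) : ℕ :=
  Nat.card {O : GenOrbit σ // genLen O ≤ X}

/-- `P_ℓ`: the number of prime orbits of length `ℓ`. -/
def Pcount {𝒳 : Type*} (σ : 𝒳 → 𝒳) (ℓ : ℕ) : ℕ :=
  Nat.card {P : PrimeOrbit σ // orbitLen P = ℓ}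

/-- The Mertens-type counting function `M_σ(X) = Σ_{1 ≤ ℓ ≤ X} P_ℓ Λ^{-ℓ}`. -/
def Mfun {𝒳 : Type*} (σ : 𝒳 → 𝒳) (Λ : ℝ) (X : ℕ) : ℝ :=
  ∑ ℓ ∈ Finset.Icc 1 X, (Pcount σ ℓ : ℝ) / Λ ^ ℓ

/-- The Cesàro mean of the real sequence `a` (indexed from `1`) equals `B`. -/
def CesaroLim (a : ℕ → ℝ) (B : ℝ) : Prop :=
  Tendsto (fun X : ℕ => (∑ k ∈ Finset.Icc 1 X, a k) / (X : ℝ)) atTop (𝓝 B)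

/-- Extended-real logarithm, sending `0` (and negative numbers) to `-∞`. -/
def elog (x : ℝ) : EReal := if x ≤ 0 then ⊥ else ((Real.log x : ℝ) : EReal)

/-- The sequence `log(σ_k)/k`, with values in the extended reals
(so that `σ_k = 0` contributes `-∞`). -/
def growthSeq {𝒳 : Type*} (σ : 𝒳 → 𝒳) (k : ℕ) : EReal :=
  elog (fixCount σ k) * ((((k : ℝ)⁻¹ : ℝ)) : EReal)

/-- The growth rate of `σ` is the (finite) real number `Λ`, i.e.
`limsup_{k→∞} log(σ_k)/k = log Λ` in the extended reals. -/
def GrowthEq {𝒳 : Type*} (σ : 𝒳 → 𝒳) (Λ : ℝ) : Prop :=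
  Filter.limsup (growthSeq σ) atTop = ((Real.log Λ : ℝ) : EReal)

/-- The probability that a uniformly chosen general orbit of length at most `X`
satisfies the predicate `Q`. -/
def probN {𝒳 : Type*} (σ : 𝒳 → 𝒳) (X : ℕ) (Q : GenOrbit σ → Prop) : ℝ :=
  (Nat.card {O : GenOrbit σ // genLen O ≤ X ∧ Q O} : ℝ) / (Ncount σ X : ℝ)

/-- `ω(O)`: the number of distinct prime orbits dividing the general orbit `O`. -/
def omegaCount {𝒳 : Type*} {σ : 𝒳 → 𝒳} (O : GenOrbit σ) : ℕ := O.support.card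


open Function

theorem ncard_Iio (n : ℕ) : (Set.Iio n).ncard = n := by
  rw [show (Set.Iio n) = ↑(Finset.Iio n) by simp, Set.ncard_coe_finset, Nat.card_Iio]

def porbit {𝒳 : Type*} (σ : 𝒳 → 𝒳) (x : 𝒳) : Set 𝒳 :=
  (fun i => σ^[i] x) '' Set.Iio (minimalPeriod σ x)

theorem porbit_ncard {𝒳 : Type*} (σ : 𝒳 → 𝒳) (x : 𝒳) :
    (porbit σ x).ncard = minimalPeriod σ x := by
  rw [porbit, Set.ncard_image_of_injOn iterate_injOn_Iio_minimalPeriod, ncard_Iio]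

theorem iterate_mem_porbit {𝒳 : Type*} {σ : 𝒳 → 𝒳} {x : 𝒳} (hx : x ∈ periodicPts σ)
    (n : ℕ) : σ^[n] x ∈ porbit σ x := by
  refine ⟨n % minimalPeriod σ x, ?_, iterate_mod_minimalPeriod_eq⟩
  exact Nat.mod_lt _ (minimalPeriod_pos_of_mem_periodicPts hx)

theorem mem_porbit_self {𝒳 : Type*} {σ : 𝒳 → 𝒳} {x : 𝒳} (hx : x ∈ periodicPts σ) :
    x ∈ porbit σ x := iterate_mem_porbit hx 0

theorem image_porbit {𝒳 : Type*} {σ : 𝒳 → 𝒳} {x : 𝒳} (hx : x ∈ periodicPts σ) :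
    σ '' porbit σ x = porbit σ x := by
  apply Set.Subset.antisymm
  · rintro _ ⟨_, ⟨i, _, rfl⟩, rfl⟩
    rw [← Function.iterate_succ_apply' σ i x]
    exact iterate_mem_porbit hx _
  · rintro _ ⟨i, _, rfl⟩
    rcases i with _ | j
    · refine ⟨σ^[minimalPeriod σ x - 1] x, iterate_mem_porbit hx _, ?_⟩
      rw [← Function.iterate_succ_apply' σ _ x]
      have : (minimalPeriod σ x - 1) + 1 = minimalPeriod σ x :=
        Nat.succ_pred_eq_of_pos (minimalPeriod_pos_of_mem_periodicPts hx)
      show σ^[minimalPeriod σ x - 1 + 1] x = _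
      rw [this]; exact iterate_minimalPeriod
    · exact ⟨σ^[j] x, iterate_mem_porbit hx _, (Function.iterate_succ_apply' σ j x).symm⟩


theorem isPrimeOrbit_porbit {𝒳 : Type*} {σ : 𝒳 → 𝒳} {x : 𝒳} (hx : x ∈ periodicPts σ) :
    IsPrimeOrbit σ (porbit σ x) :=
  ⟨x, minimalPeriod σ x, minimalPeriod_pos_of_mem_periodicPts hx, rfl,
    porbit_ncard σ x, image_porbit hx⟩

/-- Key structure lemma: any point of a prime orbit is periodic with minimal period
the cardinality of the orbit, and its porbit is the whole orbit. -/
theorem IsPrimeOrbit.eq_porbit {𝒳 : Type*} {σ : 𝒳 → 𝒳} {P : Set 𝒳}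
    (hP : IsPrimeOrbit σ P) {y : 𝒳} (hy : y ∈ P) :
    y ∈ periodicPts σ ∧ minimalPeriod σ y = P.ncard ∧ porbit σ y = P := by
  obtain ⟨x, ℓ, hℓ, hPdef, hcard, hσP⟩ := hP
  -- P is finite
  have hfin : P.Finite := by
    rw [hPdef]; exact (Set.finite_Iio ℓ).image _
  -- σ maps P bijectively to P
  have hmaps : Set.MapsTo σ P P := by
    intro z hz; rw [← hσP]; exact ⟨z, hz, rfl⟩
  have hsurj : Set.SurjOn σ P P := by rw [Set.SurjOn, hσP]
  have hbij : Set.BijOn σ P P := (hfin.surjOn_iff_bijOn_of_mapsTo hmaps).mp hsurj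
  have hinj : Set.InjOn σ P := hbij.injOn
  -- iterates stay in P
  have hiter : ∀ (n : ℕ) (z : 𝒳), z ∈ P → σ^[n] z ∈ P := by
    intro n
    induction n with
    | zero => intro z hz; exact hz
    | succ n ih => intro z hz; rw [Function.iterate_succ_apply]; exact ih _ (hmaps hz)
  have hinjiter : ∀ n : ℕ, Set.InjOn σ^[n] P := by
    intro n
    induction n with
    | zero => exact fun a _ b _ h => h
    | succ n ih => intro a ha b hb h
                   rw [Function.iterate_succ_apply] at h
                   exact hinj ha hb (ih (hmaps ha) (hmaps hb) h)
  have hxP : x ∈ P := by rw [hPdef]; exact ⟨0, hℓ, rfl⟩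
  -- x is periodic with minimal period ℓ
  have hxper : σ^[ℓ] x = x := by
    have h1 : σ^[ℓ] x ∈ P := hiter ℓ x hxP
    rw [hPdef] at h1
    obtain ⟨j, hj, hjx⟩ := h1
    rw [Set.mem_Iio] at hj
    -- σ^[ℓ] x = σ^[j] x with j < ℓ; cancel σ^[j]
    have h2 : σ^[j] (σ^[ℓ - j] x) = σ^[j] x := by
      rw [← Function.iterate_add_apply]
      rw [show j + (ℓ - j) = ℓ by omega]
      exact hjx.symm
    have h3 : σ^[ℓ - j] x = x := hinjiter j (hiter _ _ hxP) hxP h2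
    -- so minimalPeriod x ≤ ℓ - j; but P ⊆ image of Iio (minimalPeriod), so ℓ ≤ minPeriod
    have hper : IsPeriodicPt σ (ℓ - j) x := h3
    have hmem : x ∈ periodicPts σ := ⟨ℓ - j, by omega, hper⟩
    have hm := minimalPeriod_pos_of_mem_periodicPts hmem
    have hle : minimalPeriod σ x ≤ ℓ - j := hper.minimalPeriod_le (by omega)
    have hsub : P ⊆ porbit σ x := by
      rw [hPdef]; rintro _ ⟨i, _, rfl⟩; exact iterate_mem_porbit hmem i
    have hcard2 : ℓ ≤ minimalPeriod σ x := by
      rw [← hcard, ← porbit_ncard σ x]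
      exact Set.ncard_le_ncard hsub ((Set.finite_Iio _).image _)
    have : j = 0 := by omega
    subst this
    simpa using h3
  have hxmem : x ∈ periodicPts σ := ⟨ℓ, hℓ, hxper⟩
  have hminx : minimalPeriod σ x = ℓ := by
    have hle : minimalPeriod σ x ≤ ℓ := (show IsPeriodicPt σ ℓ x from hxper).minimalPeriod_le hℓ
    have hsub : P ⊆ porbit σ x := by
      rw [hPdef]; rintro _ ⟨i, _, rfl⟩; exact iterate_mem_porbit hxmem i
    have : ℓ ≤ minimalPeriod σ x := by
      rw [← hcard, ← porbit_ncard σ x]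
      exact Set.ncard_le_ncard hsub ((Set.finite_Iio _).image _)
    omega
  have hPorbx : porbit σ x = P := by
    apply Set.eq_of_subset_of_ncard_le
    · rintro _ ⟨i, _, rfl⟩; exact hiter i x hxP
    · rw [porbit_ncard, hminx, hcard]
    · exact hfin
  -- now the point y
  obtain ⟨i, hi, rfl⟩ : ∃ i, i < ℓ ∧ σ^[i] x = y := by
    have := hy; rw [hPdef] at this; obtain ⟨i, hi, hix⟩ := this; exact ⟨i, hi, hix⟩
  have hyper : IsPeriodicPt σ ℓ (σ^[i] x) := by
    show σ^[ℓ] (σ^[i] x) = σ^[i] x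
    rw [← Function.iterate_add_apply, add_comm, Function.iterate_add_apply, hxper]
  have hymem : (σ^[i] x) ∈ periodicPts σ := ⟨ℓ, hℓ, hyper⟩
  -- porbit y ⊆ P and x ∈ porbit y hence P ⊆ porbit y
  have hsub1 : porbit σ (σ^[i] x) ⊆ P := by
    rintro _ ⟨n, _, rfl⟩
    exact hiter n _ hy
  have hxin : x ∈ porbit σ (σ^[i] x) := by
    have : σ^[ℓ - i] (σ^[i] x) = x := by
      rw [← Function.iterate_add_apply, show ℓ - i + i = ℓ by omega, hxper]
    have hm := iterate_mem_porbit hymem (ℓ - i)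
    rw [this] at hm; exact hm
  have hsub2 : P ⊆ porbit σ (σ^[i] x) := by
    rw [← hPorbx]
    rintro _ ⟨n, _, rfl⟩
    have hclosed : ∀ m : ℕ, ∀ z ∈ porbit σ (σ^[i] x), σ^[m] z ∈ porbit σ (σ^[i] x) := by
      intro m
      induction m with
      | zero => intro z hz; exact hz
      | succ m ih => intro z hz
                     rw [Function.iterate_succ_apply]
                     apply ih
                     rw [← image_porbit hymem]
                     exact ⟨z, hz, rfl⟩
    exact hclosed n x hxin
  have hPeq : porbit σ (σ^[i] x) = P := Set.Subset.antisymm hsub1 hsub2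
  refine ⟨hymem, ?_, hPeq⟩
  rw [← hPeq, porbit_ncard]






theorem orbitSet_finite {𝒳 : Type*} {σ : 𝒳 → 𝒳} (hσ : Confined σ) (d : ℕ) :
    {P : Set 𝒳 | IsPrimeOrbit σ P ∧ P.ncard = d}.Finite := by
  rcases Nat.eq_zero_or_pos d with rfl | hd
  · convert Set.finite_empty
    ext P
    simp only [Set.mem_setOf_eq, Set.mem_empty_iff_false, iff_false, not_and]
    rintro ⟨x, ℓ, hℓ, _, hcard, _⟩ h0
    omega
  · apply Set.Finite.subset ((hσ d hd).finite_subsets)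
    rintro P ⟨hP, hPd⟩
    intro y hy
    obtain ⟨hyper, hymin, -⟩ := hP.eq_porbit hy
    show σ^[d] y = y
    rw [← hPd, ← hymin]
    exact iterate_minimalPeriod

theorem Pcount_eq_ncard {𝒳 : Type*} (σ : 𝒳 → 𝒳) (d : ℕ) :
    Pcount σ d = {P : Set 𝒳 | IsPrimeOrbit σ P ∧ P.ncard = d}.ncard := by
  rw [Pcount, ← Nat.card_coe_set_eq]
  apply Nat.card_congr
  exact { toFun := fun P => ⟨P.1.1, P.1.2, P.2⟩
          invFun := fun P => ⟨⟨P.1, P.2.1⟩, P.2.2⟩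
          left_inv := fun P => rfl
          right_inv := fun P => rfl }

theorem fixCount_eq_sum {𝒳 : Type*} {σ : 𝒳 → 𝒳} (hσ : Confined σ) {k : ℕ} (hk : 1 ≤ k) :
    fixCount σ k = ∑ d ∈ k.divisors, d * Pcount σ d := by
  have hkfin := hσ k hk
  set F : Finset 𝒳 := hkfin.toFinset with hF
  have hfix : fixCount σ k = F.card := by
    have h2 : Nat.card ↥{x : 𝒳 | σ^[k] x = x} = F.card := by
      rw [Nat.card_coe_set_eq, Set.ncard_eq_toFinset_card _ hkfin]
    exact h2
  set T : ℕ → Finset (Set 𝒳) := fun d => (orbitSet_finite hσ d).toFinset with hT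
  set 𝒯 : Finset (Set 𝒳) := k.divisors.biUnion T with h𝒯
  -- membership facts
  have hFper : ∀ x : 𝒳, σ^[k] x = x → x ∈ periodicPts σ := fun x hx => ⟨k, hk, hx⟩
  have hmaps : ∀ x ∈ F, porbit σ x ∈ 𝒯 := by
    intro x hx
    have hxk : σ^[k] x = x := by rw [hF, Set.Finite.mem_toFinset] at hx; exact hx
    have hper : x ∈ periodicPts σ := ⟨k, hk, hxk⟩
    rw [h𝒯, Finset.mem_biUnion]
    refine ⟨minimalPeriod σ x, ?_, ?_⟩
    · rw [Nat.mem_divisors]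
      exact ⟨(show IsPeriodicPt σ k x from hxk).minimalPeriod_dvd, by omega⟩
    · rw [hT, Set.Finite.mem_toFinset]
      exact ⟨isPrimeOrbit_porbit hper, porbit_ncard σ x⟩
  have hcardsum := Finset.card_eq_sum_card_fiberwise hmaps
  -- fibers
  have hfiber : ∀ P ∈ 𝒯, (F.filter (fun x => porbit σ x = P)).card = P.ncard := by
    intro P hP
    rw [h𝒯, Finset.mem_biUnion] at hP
    obtain ⟨d, hd, hPd⟩ := hP
    rw [hT, Set.Finite.mem_toFinset] at hPd
    obtain ⟨hPprime, hPcard⟩ := hPd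
    rw [Nat.mem_divisors] at hd
    have hPfin : P.Finite := by
      obtain ⟨x, ℓ, _, hPdef, _, _⟩ := hPprime
      rw [hPdef]; exact (Set.finite_Iio ℓ).image _
    have : F.filter (fun x => porbit σ x = P) = hPfin.toFinset := by
      ext y
      simp only [Finset.mem_filter, hF, Set.Finite.mem_toFinset, Set.mem_setOf_eq]
      constructor
      · rintro ⟨hyF, rfl⟩
        exact mem_porbit_self (hFper y hyF)
      · intro hy
        obtain ⟨hyper, hymin, hyorb⟩ := hPprime.eq_porbit hy
        refine ⟨?_, hyorb⟩
        show σ^[k] y = y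
        have : minimalPeriod σ y ∣ k := by rw [hymin, hPcard]; exact hd.1
        exact isPeriodicPt_iff_minimalPeriod_dvd.mpr this
    rw [this, ← Set.ncard_eq_toFinset_card _ hPfin]
  rw [hfix, hcardsum]
  have hsum1 : ∑ P ∈ 𝒯, (F.filter (fun x => porbit σ x = P)).card
      = ∑ P ∈ 𝒯, P.ncard := Finset.sum_congr rfl hfiber
  rw [hsum1, h𝒯]
  rw [Finset.sum_biUnion]
  · apply Finset.sum_congr rfl
    intro d hd
    have : ∀ P ∈ T d, P.ncard = d := by
      intro P hP
      rw [hT, Set.Finite.mem_toFinset] at hP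
      exact hP.2
    rw [Finset.sum_congr rfl this, Finset.sum_const, smul_eq_mul, mul_comm]
    congr 1
    rw [Pcount_eq_ncard, Set.ncard_eq_toFinset_card _ (orbitSet_finite hσ d)]
  · -- pairwise disjoint
    intro d₁ h₁ d₂ h₂ hne
    apply Finset.disjoint_left.mpr
    intro P hP1 hP2
    rw [hT, Set.Finite.mem_toFinset] at hP1 hP2
    exact hne (hP1.2 ▸ hP2.2)


/-- Harmonic-type sum with weights 1/(k+1). -/
def Wsum (X : ℕ) : ℝ := ∑ k ∈ Finset.Icc 1 X, (1 : ℝ) / (k + 1)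

theorem log_le_Hsum (X : ℕ) : Real.log (X + 1) ≤ ∑ k ∈ Finset.Icc 1 X, (1 : ℝ) / k := by
  induction X with
  | zero => simp
  | succ X ih =>
    rw [Finset.sum_Icc_succ_top (by omega : 1 ≤ X + 1)]
    have h1 : Real.log (X + 1 + 1) - Real.log (X + 1) ≤ 1 / (X + 1) := by
      rw [← Real.log_div (by positivity) (by positivity)]
      have := Real.log_le_sub_one_of_pos
        (show (0:ℝ) < ((X:ℝ) + 1 + 1) / ((X:ℝ) + 1) by positivity)
      calc Real.log (((X:ℝ) + 1 + 1) / ((X:ℝ) + 1)) ≤ ((X:ℝ) + 1 + 1) / ((X:ℝ) + 1) - 1 := this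
        _ = 1 / ((X:ℝ) + 1) := by field_simp; ring
    push_cast
    push_cast at ih
    linarith
theorem Hsum_le_log (X : ℕ) (hX : 1 ≤ X) :
    ∑ k ∈ Finset.Icc 1 X, (1 : ℝ) / k ≤ 1 + Real.log X := by
  induction X with
  | zero => omega
  | succ X ih =>
    rcases Nat.eq_zero_or_pos X with rfl | hX'
    · simp
    rw [Finset.sum_Icc_succ_top (by omega : 1 ≤ X + 1)]
    have hx0 : (0:ℝ) < X := by exact_mod_cast hX'
    have h1 : 1 / ((X:ℝ) + 1) ≤ Real.log ((X:ℝ) + 1) - Real.log X := by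
      have h2 := Real.log_le_sub_one_of_pos (show (0:ℝ) < (X:ℝ)/((X:ℝ)+1) by positivity)
      rw [Real.log_div (ne_of_gt hx0) (by positivity)] at h2
      have h3 : (X:ℝ)/((X:ℝ)+1) - 1 = -(1/((X:ℝ)+1)) := by field_simp; ring
      linarith
    have ih' := ih hX'
    push_cast
    push_cast at ih'
    linarith

theorem Wsum_eq (X : ℕ) : Wsum X = (∑ k ∈ Finset.Icc 1 (X + 1), (1 : ℝ) / k) - 1 := by
  induction X with
  | zero => simp [Wsum]
  | succ X ih =>
    rw [Wsum, Finset.sum_Icc_succ_top (by omega : 1 ≤ X + 1), ← Wsum, ih,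
      Finset.sum_Icc_succ_top (by omega : 1 ≤ X + 2)]
    push_cast
    ring

theorem Wsum_le (X : ℕ) (hX : 1 ≤ X) : Wsum X ≤ Real.log X + 1 := by
  have h1 := Hsum_le_log (X + 1) (by omega)
  rw [Wsum_eq]
  have h2 : Real.log ((X:ℕ) + 1 : ℕ) ≤ Real.log X + 1 := by
    push_cast
    have hlog2 : Real.log 2 ≤ 1 := by
      have := Real.log_le_sub_one_of_pos (show (0:ℝ) < 2 by norm_num); linarith
    have : Real.log ((X:ℝ) + 1) ≤ Real.log (2 * X) := by
      apply Real.log_le_log (by positivity)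
      have : (1:ℝ) ≤ X := by exact_mod_cast hX
      linarith
    rw [Real.log_mul (by norm_num) (by positivity : (0:ℝ) < (X:ℝ)).ne'] at this
    linarith
  push_cast at h1 h2 ⊢
  linarith

theorem le_Wsum (X : ℕ) : Real.log X - 1 ≤ Wsum X := by
  have h1 := log_le_Hsum (X + 1)
  rw [Wsum_eq]
  have h2 : Real.log X ≤ Real.log ((X:ℝ) + 1 + 1) := by
    rcases Nat.eq_zero_or_pos X with rfl | hX
    · simp; positivity
    · apply Real.log_le_log (by positivity)
      push_cast; linarith
  push_cast at h1 ⊢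
  linarith

theorem Wsum_nonneg (X : ℕ) : 0 ≤ Wsum X := by
  apply Finset.sum_nonneg; intro k _; positivity

/-- boundedness implies little-o of log -/
theorem bounded_isLittleO_log {f : ℕ → ℝ} (C : ℝ) (hf : ∀ᶠ X in atTop, |f X| ≤ C) :
    f =o[atTop] fun X : ℕ => Real.log (X : ℝ) := by
  rw [isLittleO_iff]
  intro c hc
  have hlog : Tendsto (fun X : ℕ => Real.log (X : ℝ)) atTop atTop :=
    Real.tendsto_log_atTop.comp tendsto_natCast_atTop_atTop
  filter_upwards [hf, hlog.eventually_ge_atTop (C / c), hlog.eventually_ge_atTop 0]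
    with X h1 h2 h3
  rw [Real.norm_eq_abs, Real.norm_eq_abs, abs_of_nonneg h3]
  calc |f X| ≤ C := h1
    _ = c * (C / c) := by field_simp
    _ ≤ c * Real.log X := by nlinarith

/-- vanishing sequences give o(log) weighted sums -/
theorem vanishing_sum_isLittleO_log {e : ℕ → ℝ} (he : Tendsto e atTop (𝓝 0)) :
    (fun X : ℕ => ∑ k ∈ Finset.Icc 1 X, e k / (k + 1)) =o[atTop]
      fun X : ℕ => Real.log (X : ℝ) := by
  rw [isLittleO_iff]
  intro c hc
  have hc2 : 0 < c / 2 := by linarith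
  obtain ⟨N, hN⟩ := (Metric.tendsto_atTop.mp he (c / 2) hc2)
  have hN' : ∀ k ≥ N, |e k| ≤ c / 2 := by
    intro k hk
    have := hN k hk
    rw [Real.dist_eq, sub_zero] at this
    exact le_of_lt this
  set C : ℝ := ∑ k ∈ Finset.Icc 1 N, |e k| / (k + 1) with hC
  have hCnn : 0 ≤ C := Finset.sum_nonneg fun k _ => by positivity
  have hlog : Tendsto (fun X : ℕ => Real.log (X : ℝ)) atTop atTop :=
    Real.tendsto_log_atTop.comp tendsto_natCast_atTop_atTop
  filter_upwards [eventually_ge_atTop N, hlog.eventually_ge_atTop ((C + c / 2) / (c / 2)),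
    hlog.eventually_ge_atTop 0, eventually_ge_atTop 1] with X hXN hX2 hX3 hX1
  rw [Real.norm_eq_abs, Real.norm_eq_abs, abs_of_nonneg hX3]
  have hsplit : Finset.Icc 1 X = Finset.Icc 1 N ∪ Finset.Icc (N + 1) X := by
    ext a; simp only [Finset.mem_Icc, Finset.mem_union]; omega
  have hdisj : Disjoint (Finset.Icc 1 N) (Finset.Icc (N + 1) X) := by
    apply Finset.disjoint_left.mpr
    intro a ha hb
    rw [Finset.mem_Icc] at ha hb
    omega
  have habs : |∑ k ∈ Finset.Icc 1 X, e k / (k + 1)| ≤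
      C + (c / 2) * ∑ k ∈ Finset.Icc (N + 1) X, 1 / ((k : ℝ) + 1) := by
    rw [hsplit, Finset.sum_union hdisj]
    refine (abs_add_le _ _).trans (add_le_add ?_ ?_)
    · refine (Finset.abs_sum_le_sum_abs _ _).trans ?_
      rw [hC]
      apply Finset.sum_le_sum
      intro k _
      rw [abs_div, abs_of_nonneg (by positivity : (0:ℝ) ≤ (k:ℝ) + 1)]
    · refine (Finset.abs_sum_le_sum_abs _ _).trans ?_
      rw [Finset.mul_sum]
      apply Finset.sum_le_sum
      intro k hk
      rw [Finset.mem_Icc] at hk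
      rw [abs_div, abs_of_nonneg (by positivity : (0:ℝ) ≤ (k:ℝ) + 1), mul_one_div]
      gcongr
      exact hN' k (by omega)
  have hW : ∑ k ∈ Finset.Icc (N + 1) X, 1 / ((k : ℝ) + 1) ≤ Wsum X := by
    apply Finset.sum_le_sum_of_subset_of_nonneg
    · intro a ha; rw [Finset.mem_Icc] at ha ⊢; omega
    · intro k _ _; positivity
  have hW2 := Wsum_le X hX1
  calc |∑ k ∈ Finset.Icc 1 X, e k / (k + 1)|
      ≤ C + (c / 2) * ∑ k ∈ Finset.Icc (N + 1) X, 1 / ((k : ℝ) + 1) := habs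
    _ ≤ C + (c / 2) * (Real.log X + 1) := by nlinarith
    _ ≤ c * Real.log X := by
        have : (C + c / 2) ≤ (c / 2) * Real.log X := by
          rw [div_le_iff₀ (by positivity : (0:ℝ) < c / 2)] at hX2
          linarith [hX2]
        linarith

theorem abel_identity (a : ℕ → ℝ) (X : ℕ) :
    ∑ k ∈ Finset.Icc 1 X, a k / k =
      (∑ k ∈ Finset.Icc 1 X, (∑ j ∈ Finset.Icc 1 k, a j) / (k * (k + 1)))
        + (∑ j ∈ Finset.Icc 1 X, a j) / (X + 1) := by
  induction X with
  | zero => simp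
  | succ X ih =>
    rw [Finset.sum_Icc_succ_top (by omega : 1 ≤ X + 1),
        Finset.sum_Icc_succ_top (by omega : 1 ≤ X + 1), ih]
    have h1 : (∑ j ∈ Finset.Icc 1 (X+1), a j) = (∑ j ∈ Finset.Icc 1 X, a j) + a (X+1) :=
      Finset.sum_Icc_succ_top (by omega) a
    rw [h1]
    push_cast
    have hX1 : ((X:ℝ) + 1) ≠ 0 := by positivity
    have hX2 : ((X:ℝ) + 2) ≠ 0 := by positivity
    field_simp
    ring

theorem step1 {a : ℕ → ℝ} {B : ℝ}
    (hB : Tendsto (fun X : ℕ => (∑ k ∈ Finset.Icc 1 X, a k) / (X : ℝ)) atTop (𝓝 B)) :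
    (fun X : ℕ => (∑ k ∈ Finset.Icc 1 X, a k / k) - B * Real.log (X : ℝ))
      =o[atTop] fun X : ℕ => Real.log (X : ℝ) := by
  set S : ℕ → ℝ := fun X => ∑ k ∈ Finset.Icc 1 X, a k with hS
  set e : ℕ → ℝ := fun k => S k / k - B with he
  have hetendsto : Tendsto e atTop (𝓝 0) := by
    have := hB.sub_const B
    simpa [he] using this
  -- middle sum rewrite
  have hmid : ∀ X : ℕ, ∑ k ∈ Finset.Icc 1 X, S k / (k * (k + 1))
      = B * Wsum X + ∑ k ∈ Finset.Icc 1 X, e k / (k + 1) := by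
    intro X
    rw [Wsum, Finset.mul_sum, ← Finset.sum_add_distrib]
    apply Finset.sum_congr rfl
    intro k hk
    rw [Finset.mem_Icc] at hk
    have hk0 : ((k:ℝ)) ≠ 0 := by
      have : 1 ≤ k := hk.1
      positivity
    rw [he]
    field_simp
    ring
  -- the three pieces
  have hg1 : (fun X : ℕ => B * (Wsum X - Real.log (X:ℝ))) =o[atTop]
      fun X : ℕ => Real.log (X : ℝ) := by
    apply bounded_isLittleO_log (|B| * 1)
    filter_upwards [eventually_ge_atTop 1] with X hX
    rw [abs_mul]
    apply mul_le_mul_of_nonneg_left ?_ (abs_nonneg B)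
    rw [abs_le]
    constructor
    · linarith [le_Wsum X]
    · linarith [Wsum_le X hX]
  have hg2 := vanishing_sum_isLittleO_log hetendsto
  have hg3 : (fun X : ℕ => S X / ((X:ℝ) + 1)) =o[atTop] fun X : ℕ => Real.log (X : ℝ) := by
    have ht : Tendsto (fun X : ℕ => S X / ((X:ℝ) + 1)) atTop (𝓝 B) := by
      have h2 : Tendsto (fun X : ℕ => (X:ℝ) / ((X:ℝ) + 1)) atTop (𝓝 1) := by
        have := tendsto_natCast_div_add_atTop (1 : ℝ)
        simpa using this
      have := hB.mul h2
      rw [mul_one] at this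
      apply this.congr'
      filter_upwards [eventually_ge_atTop 1] with X hX
      have hX0 : ((X:ℝ)) ≠ 0 := by
        have : 1 ≤ X := hX
        positivity
      field_simp
      rfl
    apply bounded_isLittleO_log (|B| + 1)
    have := ht.abs.eventually_le_const (show |B| < |B| + 1 by linarith)
    filter_upwards [this] with X hX using hX
  have hsum := (hg1.add hg2).add hg3
  apply hsum.congr'
  · filter_upwards with X
    rw [abel_identity a X, hmid X]
    simp only [hS]
    ring
  · rfl

theorem geom_tail_le {r : ℝ} (hr0 : 0 ≤ r) (hr1 : r < 1) (M : ℕ) :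
    ∑ m ∈ Finset.Icc 2 M, r ^ m ≤ r ^ 2 / (1 - r) := by
  have h1 : ∑ m ∈ Finset.Icc 2 M, r ^ m = ∑ j ∈ Finset.range (M - 1), r ^ (j + 2) := by
    apply Finset.sum_nbij' (fun m => m - 2) (fun j => j + 2)
    · intro a ha; rw [Finset.mem_Icc] at ha; rw [Finset.mem_range]; omega
    · intro a ha; rw [Finset.mem_range] at ha; rw [Finset.mem_Icc]; omega
    · intro a ha; rw [Finset.mem_Icc] at ha; omega
    · intro a _; omega
    · intro a ha; rw [Finset.mem_Icc] at ha; rw [show a - 2 + 2 = a by omega]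
  have h2 : ∑ j ∈ Finset.range (M - 1), r ^ (j + 2) = r ^ 2 * ∑ j ∈ Finset.range (M - 1), r ^ j := by
    rw [Finset.mul_sum]
    apply Finset.sum_congr rfl
    intro j _
    ring
  have h3 : ∑ j ∈ Finset.range (M - 1), r ^ j ≤ 1 / (1 - r) := by
    have hsummable : Summable fun j : ℕ => r ^ j := summable_geometric_of_lt_one hr0 hr1
    calc ∑ j ∈ Finset.range (M - 1), r ^ j ≤ ∑' j : ℕ, r ^ j :=
          Summable.sum_le_tsum _ (fun j _ => by positivity) hsummable
      _ = (1 - r)⁻¹ := tsum_geometric_of_lt_one hr0 hr1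
      _ = 1 / (1 - r) := (one_div _).symm
  rw [h1, h2]
  calc r ^ 2 * ∑ j ∈ Finset.range (M - 1), r ^ j ≤ r ^ 2 * (1 / (1 - r)) := by
        apply mul_le_mul_of_nonneg_left h3 (by positivity)
    _ = r ^ 2 / (1 - r) := by ring

theorem reindex_divisors (p : ℕ → ℝ) {Λ : ℝ} (hΛ : 0 < Λ) (X : ℕ) :
    ∑ k ∈ Finset.Icc 1 X, ∑ d ∈ k.divisors, ((d : ℝ) * p d) / (k * Λ ^ k)
      = ∑ l ∈ Finset.Icc 1 X, ∑ m ∈ Finset.Icc 1 (X / l), p l / (m * Λ ^ (l * m)) := by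
  rw [Finset.sum_sigma', Finset.sum_sigma']
  apply Finset.sum_nbij' (fun q => (⟨q.2, q.1 / q.2⟩ : (_ : ℕ) × ℕ))
    (fun q => (⟨q.1 * q.2, q.1⟩ : (_ : ℕ) × ℕ))
  · rintro ⟨k, d⟩ hq
    simp only [Finset.mem_sigma, Finset.mem_Icc, Nat.mem_divisors] at hq ⊢
    obtain ⟨⟨hk1, hkX⟩, hdvd, hk0⟩ := hq
    have hd1 : 1 ≤ d := Nat.one_le_iff_ne_zero.mpr (by rintro rfl; exact hk0 (zero_dvd_iff.mp hdvd))
    have hdk : d ≤ k := Nat.le_of_dvd (by omega) hdvd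
    refine ⟨⟨hd1, hdk.trans hkX⟩, ?_, Nat.div_le_div_right hkX⟩
    exact (Nat.one_le_div_iff (by omega)).mpr hdk
  · rintro ⟨l, m⟩ hq
    simp only [Finset.mem_sigma, Finset.mem_Icc, Nat.mem_divisors] at hq ⊢
    obtain ⟨⟨hl1, hlX⟩, hm1, hmX⟩ := hq
    have hmul : l * m ≤ X := by
      rw [mul_comm]; exact (Nat.le_div_iff_mul_le (by omega)).mp hmX
    exact ⟨⟨by nlinarith, hmul⟩, dvd_mul_right l m, by positivity⟩
  · rintro ⟨k, d⟩ hq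
    simp only [Finset.mem_sigma, Finset.mem_Icc, Nat.mem_divisors] at hq
    obtain ⟨⟨hk1, _⟩, hdvd, hk0⟩ := hq
    have : d * (k / d) = k := Nat.mul_div_cancel' hdvd
    simp only [this]
  · rintro ⟨l, m⟩ hq
    simp only [Finset.mem_sigma, Finset.mem_Icc] at hq
    have hl1 : 1 ≤ l := hq.1.1
    simp only [Nat.mul_div_cancel_left m (by omega : 0 < l)]
  · rintro ⟨k, d⟩ hq
    simp only [Finset.mem_sigma, Finset.mem_Icc, Nat.mem_divisors] at hq
    obtain ⟨⟨hk1, _⟩, hdvd, hk0⟩ := hq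
    have hd1 : 1 ≤ d := Nat.one_le_iff_ne_zero.mpr (by rintro rfl; exact hk0 (zero_dvd_iff.mp hdvd))
    have hmul : d * (k / d) = k := Nat.mul_div_cancel' hdvd
    show ((d : ℝ) * p d) / (k * Λ ^ k) = p d / ((k / d : ℕ) * Λ ^ (d * (k / d)))
    rw [hmul]
    have hm1 : 1 ≤ k / d := (Nat.one_le_div_iff (by omega)).mpr (Nat.le_of_dvd (by omega) hdvd)
    have hkcast : (k : ℝ) = (d : ℝ) * ((k / d : ℕ) : ℝ) := by
      rw [← Nat.cast_mul, hmul]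
    rw [hkcast]
    have h1 : ((d:ℝ)) ≠ 0 := by positivity
    have h2 : (((k / d : ℕ)):ℝ) ≠ 0 := by
      have : (1:ℝ) ≤ ((k/d : ℕ):ℝ) := by exact_mod_cast hm1
      positivity
    have h3 : Λ ^ k ≠ 0 := by positivity
    field_simp


/-- Theorem A, (M): if the growth rate `Λ` is finite with `Λ > 1` and the Cesàro mean
`B = 𝒞(σ_k/Λ^k)` exists and is positive, then `M_σ(X) = B log X + o(log X)`. -/
theorem mertens_dynamical {𝒳 : Type*} (σ : 𝒳 → 𝒳) (hσ : Confined σ)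
    (Λ B : ℝ) (hΛfin : GrowthEq σ Λ) (hΛ : 1 < Λ)
    (hB : CesaroLim (fun k => (fixCount σ k : ℝ) / Λ ^ k) B) (hBpos : 0 < B) :
    (fun X : ℕ => Mfun σ Λ X - B * Real.log (X : ℝ))
      =o[atTop] fun X : ℕ => Real.log (X : ℝ) := by
  have hΛ0 : (0:ℝ) < Λ := by linarith
  have hΛinv0 : (0:ℝ) < Λ⁻¹ := by positivity
  have hΛinv1 : Λ⁻¹ < 1 := by
    rw [inv_lt_one_iff₀]; right; exact hΛ
  set a : ℕ → ℝ := fun k => (fixCount σ k : ℝ) / Λ ^ k with ha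
  set p : ℕ → ℝ := fun ℓ => (Pcount σ ℓ : ℝ) with hp
  have hpnn : ∀ ℓ, 0 ≤ p ℓ := fun ℓ => Nat.cast_nonneg _
  have hann : ∀ k, 0 ≤ a k := fun k => by
    rw [ha]; positivity
  have hB' : Tendsto (fun X : ℕ => (∑ k ∈ Finset.Icc 1 X, a k) / (X : ℝ)) atTop (𝓝 B) := hB
  have h1 := step1 hB'
  -- bound S X ≤ C * X
  obtain ⟨C₀, hC₀⟩ := hB'.bddAbove_range
  set C : ℝ := max C₀ 0 with hCdef
  have hC0 : 0 ≤ C := le_max_right _ _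
  have hSle : ∀ X : ℕ, (∑ k ∈ Finset.Icc 1 X, a k) ≤ C * X := by
    intro X
    rcases Nat.eq_zero_or_pos X with rfl | hX
    · simp
    have h2 : (∑ k ∈ Finset.Icc 1 X, a k) / (X:ℝ) ≤ C₀ :=
      hC₀ (Set.mem_range_self X)
    have hXpos : (0:ℝ) < X := by exact_mod_cast hX
    have := (div_le_iff₀ hXpos).mp h2
    calc (∑ k ∈ Finset.Icc 1 X, a k) ≤ C₀ * X := this
      _ ≤ C * X := by
          apply mul_le_mul_of_nonneg_right (le_max_left _ _) hXpos.le
  have haC : ∀ ℓ : ℕ, 1 ≤ ℓ → a ℓ ≤ C * ℓ := by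
    intro ℓ hℓ
    refine le_trans ?_ (hSle ℓ)
    exact Finset.single_le_sum (fun k _ => hann k) (Finset.mem_Icc.mpr ⟨hℓ, le_refl ℓ⟩)
  -- Pcount ≤ fixCount
  have hple : ∀ ℓ : ℕ, 1 ≤ ℓ → p ℓ ≤ (fixCount σ ℓ : ℝ) := by
    intro ℓ hℓ
    have h2 : Pcount σ ℓ ≤ fixCount σ ℓ := by
      rw [fixCount_eq_sum hσ hℓ]
      calc Pcount σ ℓ ≤ ℓ * Pcount σ ℓ := Nat.le_mul_of_pos_left _ (by omega)
        _ ≤ ∑ d ∈ ℓ.divisors, d * Pcount σ d := by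
            apply Finset.single_le_sum (f := fun d => d * Pcount σ d)
              (fun d _ => Nat.zero_le _)
            exact Nat.mem_divisors_self ℓ (by omega)
    simp only [hp]
    exact_mod_cast h2
  -- the double-sum expression for T
  have hT : ∀ X : ℕ, (∑ k ∈ Finset.Icc 1 X, a k / k)
      = ∑ l ∈ Finset.Icc 1 X, ∑ m ∈ Finset.Icc 1 (X / l), p l / (m * Λ ^ (l * m)) := by
    intro X
    rw [← reindex_divisors p hΛ0 X]
    apply Finset.sum_congr rfl
    intro k hk
    rw [Finset.mem_Icc] at hk
    have hfix : (fixCount σ k : ℝ) = ∑ d ∈ k.divisors, (d:ℝ) * p d := by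
      simp only [hp]
      rw [fixCount_eq_sum hσ hk.1]
      push_cast
      rfl
    rw [ha]
    show (fixCount σ k : ℝ) / Λ ^ k / k = _
    rw [hfix, Finset.sum_div, Finset.sum_div]
    apply Finset.sum_congr rfl
    intro d _
    rw [div_div, mul_comm (Λ ^ k) (k:ℝ)]
  -- the difference D
  set D : ℕ → ℝ := fun X =>
    ∑ l ∈ Finset.Icc 1 X, ∑ m ∈ Finset.Icc 2 (X / l), p l / (m * Λ ^ (l * m)) with hD
  have hTD : ∀ X : ℕ, (∑ k ∈ Finset.Icc 1 X, a k / k) = Mfun σ Λ X + D X := by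
    intro X
    rw [hT X, hD, Mfun, ← Finset.sum_add_distrib]
    apply Finset.sum_congr rfl
    intro l hl
    rw [Finset.mem_Icc] at hl
    have hXl : 1 ≤ X / l := (Nat.one_le_div_iff (by omega)).mpr hl.2
    have hsplit : Finset.Icc 1 (X / l) = insert 1 (Finset.Icc 2 (X / l)) := by
      ext b
      simp only [Finset.mem_Icc, Finset.mem_insert]
      omega
    rw [hsplit, Finset.sum_insert (by simp [Finset.mem_Icc])]
    simp only [mul_one, Nat.cast_one, one_mul, hp]
  -- D is nonnegative and bounded
  have hDnn : ∀ X : ℕ, 0 ≤ D X := by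
    intro X
    apply Finset.sum_nonneg
    intro l _
    apply Finset.sum_nonneg
    intro m hm
    rw [Finset.mem_Icc] at hm
    have : (0:ℝ) < m := by
      have : 2 ≤ m := hm.1
      positivity
    have := hpnn l
    positivity
  have hsummable : Summable (fun n : ℕ => (n:ℝ) * (Λ⁻¹) ^ n) := by
    have := summable_pow_mul_geometric_of_norm_lt_one 1
      (show ‖Λ⁻¹‖ < 1 by rw [Real.norm_eq_abs, abs_of_pos hΛinv0]; exact hΛinv1)
    simpa using this
  set K : ℝ := C * (1 / (1 - Λ⁻¹)) * (∑' n : ℕ, (n:ℝ) * (Λ⁻¹) ^ n) with hK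
  have hinvpos : (0:ℝ) < 1 - Λ⁻¹ := by linarith
  have htsumnn : 0 ≤ ∑' n : ℕ, (n:ℝ) * (Λ⁻¹) ^ n :=
    tsum_nonneg (fun n => by positivity)
  have hDK : ∀ X : ℕ, D X ≤ K := by
    intro X
    rw [hD]
    have hterm : ∀ l ∈ Finset.Icc 1 X,
        (∑ m ∈ Finset.Icc 2 (X / l), p l / (m * Λ ^ (l * m)))
          ≤ (C * (1 / (1 - Λ⁻¹))) * ((l:ℝ) * (Λ⁻¹) ^ l) := by
      intro l hl
      rw [Finset.mem_Icc] at hl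
      have hl1 : 1 ≤ l := hl.1
      set r : ℝ := (Λ⁻¹) ^ l with hr
      have hr0 : 0 ≤ r := by positivity
      have hr1 : r < 1 := pow_lt_one₀ hΛinv0.le hΛinv1 (by omega)
      have hrle : r ≤ Λ⁻¹ := by
        rw [hr]
        calc (Λ⁻¹) ^ l ≤ (Λ⁻¹) ^ 1 := pow_le_pow_of_le_one hΛinv0.le hΛinv1.le hl1
          _ = Λ⁻¹ := pow_one _
      have hstep1 : (∑ m ∈ Finset.Icc 2 (X / l), p l / (m * Λ ^ (l * m)))
          ≤ p l * ∑ m ∈ Finset.Icc 2 (X / l), r ^ m := by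
        rw [Finset.mul_sum]
        apply Finset.sum_le_sum
        intro m hm
        rw [Finset.mem_Icc] at hm
        have hm2 : 2 ≤ m := hm.1
        have hmpos : (0:ℝ) < m := by positivity
        have hpow : Λ ^ (l * m) > 0 := by positivity
        have hrm : r ^ m = (Λ ^ (l * m))⁻¹ := by
          rw [hr, ← pow_mul, inv_pow]
        rw [hrm, div_le_iff₀ (by positivity)]
        have hm1 : (1:ℝ) ≤ m := by exact_mod_cast (by omega : 1 ≤ m)
        calc p l = p l * 1 := (mul_one _).symm
          _ ≤ p l * m := by
              apply mul_le_mul_of_nonneg_left hm1 (hpnn l)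
          _ = p l * (Λ ^ (l * m))⁻¹ * (m * Λ ^ (l * m)) := by
              field_simp
        -- done
      have hstep2 : p l * ∑ m ∈ Finset.Icc 2 (X / l), r ^ m ≤ p l * (r ^ 2 / (1 - Λ⁻¹)) := by
        apply mul_le_mul_of_nonneg_left ?_ (hpnn l)
        calc ∑ m ∈ Finset.Icc 2 (X / l), r ^ m ≤ r ^ 2 / (1 - r) := geom_tail_le hr0 hr1 _
          _ ≤ r ^ 2 / (1 - Λ⁻¹) := by
              apply div_le_div_of_nonneg_left (by positivity) hinvpos (by linarith)
      have hstep3 : p l * (r ^ 2 / (1 - Λ⁻¹)) ≤ (C * (1 / (1 - Λ⁻¹))) * ((l:ℝ) * r) := by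
        have hplr : p l * r ≤ C * l := by
          calc p l * r ≤ (fixCount σ l : ℝ) * r := by
                apply mul_le_mul_of_nonneg_right (hple l hl1) hr0
            _ = a l := by
                rw [ha, hr, inv_pow, ← div_eq_mul_inv]
            _ ≤ C * l := haC l hl1
        have : p l * (r ^ 2 / (1 - Λ⁻¹)) = (p l * r) * r * (1 / (1 - Λ⁻¹)) := by ring
        rw [this]
        have h4 : (p l * r) * r ≤ (C * l) * r := by
          apply mul_le_mul_of_nonneg_right hplr hr0
        calc (p l * r) * r * (1 / (1 - Λ⁻¹)) ≤ (C * l) * r * (1 / (1 - Λ⁻¹)) := by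
              apply mul_le_mul_of_nonneg_right h4 (by positivity)
          _ = (C * (1 / (1 - Λ⁻¹))) * ((l:ℝ) * r) := by ring
      exact (hstep1.trans hstep2).trans hstep3
    calc ∑ l ∈ Finset.Icc 1 X, ∑ m ∈ Finset.Icc 2 (X / l), p l / (m * Λ ^ (l * m))
        ≤ ∑ l ∈ Finset.Icc 1 X, (C * (1 / (1 - Λ⁻¹))) * ((l:ℝ) * (Λ⁻¹) ^ l) :=
          Finset.sum_le_sum hterm
      _ = (C * (1 / (1 - Λ⁻¹))) * ∑ l ∈ Finset.Icc 1 X, (l:ℝ) * (Λ⁻¹) ^ l := by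
          rw [Finset.mul_sum]
      _ ≤ K := by
          rw [hK]
          apply mul_le_mul_of_nonneg_left ?_ (by positivity)
          exact Summable.sum_le_tsum _ (fun n _ => by positivity) hsummable
  have hDlittle : D =o[atTop] fun X : ℕ => Real.log (X : ℝ) := by
    apply bounded_isLittleO_log K
    filter_upwards with X
    rw [abs_of_nonneg (hDnn X)]
    exact hDK X
  have hfinal := h1.sub hDlittle
  apply hfinal.congr'
  · filter_upwards with X
    show _ = Mfun σ Λ X - B * Real.log (X : ℝ)
    linarith [hTD X]
  · rfl
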